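/- Let t > 1 be odd and let G = ℤ_t × ℤ_2 × ℤ_2, with elements indexed by ι : {1,…,4t} → G, ι(k) = (⌊(k−1)/4⌋ mod t, ⌊((k−1) mod 4)/2⌋ mod 2, (k−1) mod 2). For integers s, c with 5 ≤ s ≤ 2t+2 and 1 ≤ c ≤ 4t, define j(s,c) := 1 + 4·[⌊(s−1)/4⌋ + ⌊(c−1)/4⌋]_t + 2·[⌊((s−1) mod 4)/2⌋ + ⌊((c−1) mod 4)/2⌋]_2 + [s+c]_2, where [n]_m denotes n mod m. Then the two generalized coboundary matrices with entry −1 at position (ι(s), ι(c)) are exactly M̄_{ι(c)} and M̄_{ι(j(s,c))}; that is, 1 ≤ j(s,c) ≤ 4t and {d ∈ G : M̄_d(ι(s), ι(c)) = −1} = {ι(c), ι(j(s,c))}. -/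

import Mathlib

/-- The characteristic map `δ_d` (for the additive group `ℤ_t × ℤ_2 × ℤ_2`). -/
def charMap {A : Type*} [DecidableEq A] (d x : A) : ℤ := if x = d then -1 else 1

/-- The elementary coboundary `∂_d` over an additive group. -/
def elemCob {A : Type*} [AddGroup A] [DecidableEq A] (d g h : A) : ℤ :=
  charMap d g * charMap d h * charMap d (g + h)

/-- The generalized coboundary matrix `M̄_d`: the matrix of `∂_d` with row `d` negated. -/
def genCob {A : Type*} [AddGroup A] [DecidableEq A] (d g h : A) : ℤ :=
  if g = d then -(elemCob d g h) else elemCob d g h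

/-- The indexing `ι : {1,…,4t} → ℤ_t × ℤ_2 × ℤ_2` of the paper. -/
def iota (t : ℕ) (k : ℕ) : ZMod t × ZMod 2 × ZMod 2 :=
  ((((k - 1) / 4 : ℕ) : ZMod t), ((((k - 1) % 4) / 2 : ℕ) : ZMod 2), (((k - 1) % 2 : ℕ) : ZMod 2))

/-- The index function `j(s,c)`. -/
def jIdx (t s c : ℕ) : ℕ :=
  1 + 4 * (((s - 1) / 4 + (c - 1) / 4) % t)
    + 2 * ((((s - 1) % 4) / 2 + ((c - 1) % 4) / 2) % 2)
    + (s + c) % 2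

lemma genCob_eq_neg_one_iff {A : Type*} [AddGroup A] [DecidableEq A] (d g h : A) :
    genCob d g h = -1 ↔ ¬(h = d ↔ g + h = d) := by
  unfold genCob elemCob charMap
  split_ifs <;> simp_all

lemma iota_jIdx (t s c : ℕ) (ht : 1 < t) (hs1 : 5 ≤ s) (hc1 : 1 ≤ c) :
    iota t (jIdx t s c) = iota t s + iota t c := by
  have ht0 : 0 < t := by omega
  set A := ((s - 1) / 4 + (c - 1) / 4) % t with hA
  set B := (((s - 1) % 4) / 2 + ((c - 1) % 4) / 2) % 2 with hB
  set E := (s + c) % 2 with hE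
  have hAt : A < t := Nat.mod_lt _ ht0
  have hB2 : B < 2 := Nat.mod_lt _ (by norm_num)
  have hE2 : E < 2 := Nat.mod_lt _ (by norm_num)
  have hj : jIdx t s c = 1 + 4 * A + 2 * B + E := rfl
  have h1 : (jIdx t s c - 1) / 4 = A := by omega
  have h2 : ((jIdx t s c - 1) % 4) / 2 = B := by omega
  have h3 : (jIdx t s c - 1) % 2 = E := by omega
  unfold iota
  rw [h1, h2, h3, Prod.mk_add_mk, Prod.mk_add_mk, Prod.mk.injEq, Prod.mk.injEq]
  refine ⟨?_, ?_, ?_⟩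
  · rw [hA, ← Nat.cast_add, ZMod.natCast_eq_natCast_iff]
    exact Nat.mod_modEq _ t
  · rw [hB, ← Nat.cast_add, ZMod.natCast_eq_natCast_iff]
    exact Nat.mod_modEq _ 2
  · rw [hE, ← Nat.cast_add, ZMod.natCast_eq_natCast_iff]
    unfold Nat.ModEq
    omega

/-- for `5 ≤ s ≤ 2t+2` and `1 ≤ c ≤ 4t`, the two generalized coboundary
matrices with entry `-1` at position `(ι(s), ι(c))` are exactly `M̄_{ι(c)}` and
`M̄_{ι(j(s,c))}`. -/
theorem genCob_negative_at_position_Z (t : ℕ) (ht : 1 < t) (htodd : Odd t)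
    (s c : ℕ) (hs1 : 5 ≤ s) (hs2 : s ≤ 2 * t + 2) (hc1 : 1 ≤ c) (hc2 : c ≤ 4 * t) :
    1 ≤ jIdx t s c ∧ jIdx t s c ≤ 4 * t ∧
      {d : ZMod t × ZMod 2 × ZMod 2 | genCob d (iota t s) (iota t c) = -1} =
        {iota t c, iota t (jIdx t s c)} := by
  have ht0 : 0 < t := by omega
  haveI : NeZero t := ⟨by omega⟩
  have hAt : ((s - 1) / 4 + (c - 1) / 4) % t < t := Nat.mod_lt _ ht0
  have hB2 : (((s - 1) % 4) / 2 + ((c - 1) % 4) / 2) % 2 < 2 := Nat.mod_lt _ (by norm_num)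
  have hE2 : (s + c) % 2 < 2 := Nat.mod_lt _ (by norm_num)
  refine ⟨by unfold jIdx; omega, by unfold jIdx; omega, ?_⟩
  -- iota s ≠ 0
  have hs0 : iota t s ≠ 0 := by
    intro h
    have h1 : ((((s - 1) / 4 : ℕ) : ZMod t)) = 0 := congrArg Prod.fst h
    have hlt : (s - 1) / 4 < t := by omega
    have := ZMod.val_cast_of_lt hlt
    rw [h1, ZMod.val_zero] at this
    omega
  have hj := iota_jIdx t s c ht hs1 hc1
  have hne : iota t c ≠ iota t s + iota t c := by
    intro h
    apply hs0
    have := add_right_cancel (a := iota t s) (b := iota t c) (c := 0)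
    exact (right_eq_add.mp h)
  ext d
  simp only [Set.mem_setOf_eq, genCob_eq_neg_one_iff, Set.mem_insert_iff,
    Set.mem_singleton_iff, hj]
  constructor
  · intro h
    by_cases h1 : iota t c = d
    · exact Or.inl h1.symm
    · by_cases h2 : iota t s + iota t c = d
      · exact Or.inr h2.symm
      · exact absurd (iff_of_false h1 h2) h
  · rintro (rfl | rfl) hiff
    · exact hne (hiff.mp rfl).symm
    · exact hne (hiff.mpr rfl)
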